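/- For every integer n ≥ 3, f(n) = L(n) or f(n) = L(n) − 1. -/
import Mathlib


noncomputable def f (n : ℕ) : ℕ :=
  sInf {k : ℕ | 0 < k ∧ (n.choose k : ℝ) > 2 ^ n / (n + 1)}

noncomputable def L (n : ℕ) : ℕ :=
  sInf {k : ℕ | 0 < k ∧ (n.choose k : ℝ) > 2 ^ n / n}

lemma two_pow_lt_mul_choose (n : ℕ) (hn : 3 ≤ n) : 2 ^ n < n * n.choose (n / 2) := by
  have hC : n ≤ n.choose (n / 2) := by
    simpa using Nat.choose_le_middle 1 n
  have hsum : ∑ i ∈ Finset.range (n + 1), n.choose i = 2 ^ n := Nat.sum_range_choose n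
  have hS : ∑ i ∈ Finset.Ico 1 n, n.choose i ≤ (n - 1) * n.choose (n / 2) := by
    have := Finset.sum_le_card_nsmul (Finset.Ico 1 n) (fun i => n.choose i)
      (n.choose (n / 2)) (fun i _ => Nat.choose_le_middle i n)
    simpa [Nat.card_Ico, smul_eq_mul] using this
  have hsplit : 2 ^ n = 2 + ∑ i ∈ Finset.Ico 1 n, n.choose i := by
    have h1 : ∑ i ∈ Finset.range (n + 1), n.choose i
        = ∑ i ∈ Finset.range n, n.choose i + n.choose n := Finset.sum_range_succ _ _
    have h2 : ∑ i ∈ Finset.range n, n.choose i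
        = n.choose 0 + ∑ i ∈ Finset.Ico 1 n, n.choose i := by
      rw [Finset.range_eq_Ico]
      exact Finset.sum_eq_sum_Ico_succ_bot (by omega) _
    rw [← hsum, h1, h2]
    simp
    omega
  have hmul : n * n.choose (n / 2) = (n - 1) * n.choose (n / 2) + n.choose (n / 2) := by
    have : n - 1 + 1 = n := by omega
    calc n * n.choose (n / 2) = (n - 1 + 1) * n.choose (n / 2) := by rw [this]
      _ = (n - 1) * n.choose (n / 2) + n.choose (n / 2) := by ring
  omega

lemma choose_step (n k : ℕ) (h : 2 * (k + 1) ≤ n) :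
    (n + 1) * n.choose k ≤ n * n.choose (k + 1) := by
  have hid : n.choose (k + 1) * (k + 1) = n.choose k * (n - k) := Nat.choose_succ_right_eq n k
  have hk2 : k + 2 ≤ n - k := by omega
  have h1 : (n + 1) * (k + 1) ≤ n * (n - k) := by
    have h0 : (n + 1) * (k + 1) ≤ n * (k + 2) := by nlinarith
    exact h0.trans (Nat.mul_le_mul_left n hk2)
  refine Nat.le_of_mul_le_mul_right ?_ (Nat.succ_pos k)
  calc (n + 1) * n.choose k * (k + 1)
      = (n + 1) * (k + 1) * n.choose k := by ring
    _ ≤ n * (n - k) * n.choose k := Nat.mul_le_mul_right _ h1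
    _ = n * (n.choose k * (n - k)) := by ring
    _ = n * (n.choose (k + 1) * (k + 1)) := by rw [hid]
    _ = n * n.choose (k + 1) * (k + 1) := by ring

theorem f_eq_L_or_pred (n : ℕ) (hn : 3 ≤ n) : f n = L n ∨ f n = L n - 1 := by
  have hn0 : (0 : ℝ) < n := by positivity
  have hn1 : (0 : ℝ) < (n : ℝ) + 1 := by positivity
  set SL := {k : ℕ | 0 < k ∧ (n.choose k : ℝ) > 2 ^ n / n} with hSL
  set Sf := {k : ℕ | 0 < k ∧ (n.choose k : ℝ) > 2 ^ n / (n + 1)} with hSf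
  have hmid : (2 : ℝ) ^ n / n < n.choose (n / 2) := by
    rw [div_lt_iff₀ hn0]
    have := two_pow_lt_mul_choose n hn
    calc (2 : ℝ) ^ n < (n * n.choose (n / 2) : ℕ) := by exact_mod_cast this
      _ = (n.choose (n / 2) : ℝ) * n := by push_cast; ring
  have hsub : SL ⊆ Sf := by
    intro k hk
    refine ⟨hk.1, lt_of_le_of_lt ?_ hk.2⟩
    apply div_le_div_of_nonneg_left (by positivity) hn0
    linarith
  have hmL : n / 2 ∈ SL := ⟨by omega, hmid⟩
  have hmf : n / 2 ∈ Sf := hsub hmL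
  have hL_mem : L n ∈ SL := Nat.sInf_mem ⟨_, hmL⟩
  have hf_mem : f n ∈ Sf := Nat.sInf_mem ⟨_, hmf⟩
  have hfL : f n ≤ L n := Nat.sInf_le (hsub hL_mem)
  by_cases h : (2 : ℝ) ^ n / n < n.choose (f n)
  · left
    exact le_antisymm hfL (Nat.sInf_le ⟨hf_mem.1, h⟩)
  · right
    push_neg at h
    have hfm : f n ≤ n / 2 := Nat.sInf_le hmf
    have hfne : f n ≠ n / 2 := by
      intro he
      rw [he] at h
      exact absurd hmid (not_lt.mpr h)
    have hfm' : 2 * (f n + 1) ≤ n := by omega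
    have hstep := choose_step n (f n) hfm'
    have hnext : (2 : ℝ) ^ n / n < n.choose (f n + 1) := by
      rw [div_lt_iff₀ hn0]
      have h1 : (2 : ℝ) ^ n < ((n : ℝ) + 1) * n.choose (f n) := by
        have := hf_mem.2
        rw [gt_iff_lt, div_lt_iff₀ hn1] at this
        linarith
      have h2 : ((n : ℝ) + 1) * n.choose (f n) ≤ (n : ℝ) * n.choose (f n + 1) := by
        exact_mod_cast hstep
      calc (2 : ℝ) ^ n < ((n : ℝ) + 1) * n.choose (f n) := h1
        _ ≤ (n : ℝ) * n.choose (f n + 1) := h2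
        _ = (n.choose (f n + 1) : ℝ) * n := by ring
    have hLle : L n ≤ f n + 1 := Nat.sInf_le ⟨by omega, hnext⟩
    have hfneL : f n ≠ L n := by
      intro he
      rw [he] at h
      exact absurd hL_mem.2 (not_lt.mpr h)
    omega
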